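/- Let G be a finite simple graph that is a König-Egerváry graph, and let v be a vertex of G. If μ(G) = μ(G - v), then G - v is also a König-Egerváry graph and v belongs to core(G). -/

import Mathlib

/-- A set of vertices is independent if no two of its vertices are adjacent. -/
def IsIndep {V : Type*} (G : SimpleGraph V) (s : Set V) : Prop :=
  ∀ u ∈ s, ∀ w ∈ s, ¬ G.Adj u w

open Classical in
/-- The independence number `α(G)`: the maximum cardinality of an independent set. -/
noncomputable def indepNum {V : Type*} (G : SimpleGraph V) [Fintype V] : ℕ :=
  Nat.findGreatest (fun n => ∃ s : Set V, IsIndep G s ∧ s.ncard = n) (Fintype.card V)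

/-- A matching: a set of edges of `G` that are pairwise vertex-disjoint. -/
def IsMatchingSet {V : Type*} (G : SimpleGraph V) (M : Finset (Sym2 V)) : Prop :=
  (↑M : Set (Sym2 V)) ⊆ G.edgeSet ∧
    ∀ e ∈ M, ∀ f ∈ M, e ≠ f → ∀ x : V, ¬(x ∈ e ∧ x ∈ f)

open Classical in
/-- The matching number `μ(G)`: the maximum cardinality of a matching. -/
noncomputable def matchNum {V : Type*} (G : SimpleGraph V) [Fintype V] : ℕ :=
  Nat.findGreatest (fun n => ∃ M : Finset (Sym2 V), IsMatchingSet G M ∧ M.card = n)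
    (Fintype.card V)

/-- A maximum independent set: an independent set of cardinality `α(G)`. -/
def IsMaxIndep {V : Type*} (G : SimpleGraph V) [Fintype V] (s : Set V) : Prop :=
  IsIndep G s ∧ s.ncard = indepNum G

/-- `core(G)`: the intersection of all maximum independent sets of `G`. -/
def core {V : Type*} (G : SimpleGraph V) [Fintype V] : Set V :=
  {v : V | ∀ s : Set V, IsMaxIndep G s → v ∈ s}

/-- `G` is a König-Egerváry graph if `α(G) + μ(G) = |V(G)|`. -/
def IsKonigEgervary {V : Type*} (G : SimpleGraph V) [Fintype V] : Prop :=
  indepNum G + matchNum G = Fintype.card V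

/-- `G - v`: the subgraph of `G` induced on `V \ {v}`. -/
def deleteVert {V : Type*} (G : SimpleGraph V) (v : V) : SimpleGraph {u : V // u ≠ v} :=
  SimpleGraph.comap Subtype.val G

/-- A perfect matching: a matching covering all vertices of `G`. -/
def HasPerfectMatching {V : Type*} (G : SimpleGraph V) : Prop :=
  ∃ M : Finset (Sym2 V), IsMatchingSet G M ∧ ∀ v : V, ∃ e ∈ M, v ∈ e

/-- `N(A)`: the set of all vertices adjacent to some vertex of `A`. -/
def nbhd {V : Type*} (G : SimpleGraph V) (A : Set V) : Set V :=
  {w : V | ∃ u ∈ A, G.Adj u w}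


open Classical in
lemma indep_le_indepNum {W : Type*} [Fintype W] (H : SimpleGraph W) {s : Set W}
    (hs : IsIndep H s) : s.ncard ≤ indepNum H := by
  apply Nat.le_findGreatest
  · calc s.ncard ≤ (Set.univ : Set W).ncard :=
        Set.ncard_le_ncard (Set.subset_univ s) Set.finite_univ
      _ = Fintype.card W := by rw [Set.ncard_univ, Nat.card_eq_fintype_card]
  · exact ⟨s, hs, rfl⟩

open Classical in
lemma exists_max_indep {W : Type*} [Fintype W] (H : SimpleGraph W) :
    ∃ s : Set W, IsIndep H s ∧ s.ncard = indepNum H :=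
  Nat.findGreatest_spec (P := fun n => ∃ s : Set W, IsIndep H s ∧ s.ncard = n) (Nat.zero_le _)
    ⟨∅, fun u hu => absurd hu (Set.notMem_empty u), Set.ncard_empty _⟩

open Classical in
lemma exists_max_matching {W : Type*} [Fintype W] (H : SimpleGraph W) :
    ∃ M : Finset (Sym2 W), IsMatchingSet H M ∧ M.card = matchNum H :=
  Nat.findGreatest_spec (P := fun n => ∃ M : Finset (Sym2 W), IsMatchingSet H M ∧ M.card = n) (Nat.zero_le _)
    ⟨∅, ⟨by simp, by simp⟩, Finset.card_empty⟩

lemma indep_add_matching_le {W : Type*} [Fintype W] (H : SimpleGraph W) {s : Set W}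
    (hs : IsIndep H s) {M : Finset (Sym2 W)} (hM : IsMatchingSet H M) :
    s.ncard + M.card ≤ Fintype.card W := by
  classical
  have key : ∀ e ∈ M, ∃ x, x ∈ e ∧ x ∉ s := by
    intro e he
    have hedge : e ∈ H.edgeSet := hM.1 he
    induction e using Sym2.ind with
    | _ x y =>
      rw [SimpleGraph.mem_edgeSet] at hedge
      by_cases hx : x ∈ s
      · by_cases hy : y ∈ s
        · exact absurd hedge (hs x hx y hy)
        · exact ⟨y, Sym2.mem_mk_right x y, hy⟩
      · exact ⟨x, Sym2.mem_mk_left x y, hx⟩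
  have hMle : M.card ≤ (sᶜ).ncard := by
    have hle : M.card ≤ (sᶜ).toFinset.card := by
      apply Finset.card_le_card_of_injOn
        (fun e => if h : ∃ x, x ∈ e ∧ x ∉ s then h.choose else (Quot.out e).1)
      · intro e he
        beta_reduce
        rw [dif_pos (key e he)]
        rw [Finset.mem_coe, Set.mem_toFinset]
        exact (key e he).choose_spec.2
      · intro e he f hf hef
        rw [Finset.mem_coe] at he hf
        by_contra hne
        have h1 := (key e he).choose_spec
        have h2 := (key f hf).choose_spec
        simp only [dif_pos (key e he), dif_pos (key f hf)] at hef
        exact hM.2 e he f hf hne _ ⟨h1.1, by rw [hef]; exact h2.1⟩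
    rwa [Set.ncard_eq_toFinset_card']
  have hcompl := Set.ncard_add_ncard_compl s
  rw [Nat.card_eq_fintype_card] at hcompl
  omega

lemma pullback_indep {V : Type*} [Fintype V] (G : SimpleGraph V) (v : V) {s : Set V}
    (hs : IsIndep G s) :
    IsIndep (deleteVert G v) (Subtype.val ⁻¹' s) ∧
      (Subtype.val ⁻¹' s : Set {u : V // u ≠ v}).ncard = (s \ {v}).ncard := by
  constructor
  · intro u hu w hw hadj
    exact hs _ hu _ hw hadj
  · rw [← Set.ncard_image_of_injective _ Subtype.val_injective]
    congr 1
    rw [Set.image_preimage_eq_inter_range, Subtype.range_coe_subtype]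
    ext x
    show (x ∈ s ∧ ¬x = v) ↔ (x ∈ s ∧ x ∉ ({v} : Set V))
    simp

theorem stmt_0 {V : Type*} [Fintype V] [DecidableEq V] (G : SimpleGraph V)
    (hKE : IsKonigEgervary G) (v : V)
    (h : matchNum G = matchNum (deleteVert G v)) :
    IsKonigEgervary (deleteVert G v) ∧ v ∈ core G := by
  classical
  have hcard : Fintype.card {u : V // u ≠ v} = Fintype.card V - 1 := by
    have h1 : Fintype.card {u : V // u = v} = 1 := Fintype.card_subtype_eq v
    have := Fintype.card_subtype_compl (fun u : V => u = v)
    simpa [h1] using this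
  have hn : 1 ≤ Fintype.card V := Fintype.card_pos_iff.mpr ⟨v⟩
  -- a ≥ 1
  have ha1 : 1 ≤ indepNum G := by
    have : ({v} : Set V).ncard ≤ indepNum G := by
      apply indep_le_indepNum
      intro u hu w hw hadj
      rw [Set.mem_singleton_iff] at hu hw
      subst hu; subst hw
      exact G.irrefl hadj
    simpa using this
  -- upper bound on G - v
  obtain ⟨s₁, hs₁, hs₁c⟩ := exists_max_indep (deleteVert G v)
  obtain ⟨M₁, hM₁, hM₁c⟩ := exists_max_matching (deleteVert G v)
  have hub : indepNum (deleteVert G v) + matchNum (deleteVert G v) ≤ Fintype.card V - 1 := by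
    have := indep_add_matching_le (deleteVert G v) hs₁ hM₁
    rw [hs₁c, hM₁c, hcard] at this
    exact this
  -- lower bound
  obtain ⟨S, hS, hSc⟩ := exists_max_indep G
  have hlb : indepNum G - 1 ≤ indepNum (deleteVert G v) := by
    obtain ⟨hind, hcardeq⟩ := pullback_indep G v hS
    have hle := indep_le_indepNum (deleteVert G v) hind
    rw [hcardeq] at hle
    by_cases hv : v ∈ S
    · rw [Set.ncard_diff_singleton_of_mem hv, hSc] at hle
      exact hle
    · rw [Set.diff_singleton_eq_self hv, hSc] at hle
      omega
  have hKE' : indepNum (deleteVert G v) + matchNum (deleteVert G v) =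
      Fintype.card {u : V // u ≠ v} := by
    rw [hcard]
    unfold IsKonigEgervary at hKE
    omega
  refine ⟨hKE', ?_⟩
  intro T ⟨hT, hTc⟩
  by_contra hv
  obtain ⟨hind, hcardeq⟩ := pullback_indep G v hT
  have hle := indep_le_indepNum (deleteVert G v) hind
  rw [hcardeq, Set.diff_singleton_eq_self hv, hTc] at hle
  unfold IsKonigEgervary at hKE
  omega
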